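/- For every natural number n ≥ 2 and every x with 0 ≤ x < n!, there exist bits c_{k,i} ∈ {0,1}, for k ∈ {1,...,n-1} and i ∈ {1,...,⌈log₂ n⌉}, such that x = Σ_{k=1}^{n-1} Σ_{i=1}^{⌈log₂ n⌉} c_{k,i} · ⌈k / 2^{i}⌉ · k!. -/

import Mathlib

/-- `k ≤ d * ⌈k/d⌉` for natural ceiling division. -/
lemma my_le_mul_ceilDiv (k d : ℕ) (hd : 0 < d) : k ≤ d * ((k + d - 1) / d) := by
  have h := Nat.div_add_mod (k + d - 1) d
  have hr : (k + d - 1) % d < d := Nat.mod_lt _ hd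
  set q := (k + d - 1) / d
  set r := (k + d - 1) % d
  omega

/-- Cast lemma: real ceiling of `k/d` equals natural ceiling division. -/
lemma my_ceil_cast (k d : ℕ) (hd : 0 < d) :
    ⌈(k : ℝ) / d⌉ = (((k + d - 1) / d : ℕ) : ℤ) := by
  have hd' : (0 : ℝ) < d := by exact_mod_cast hd
  set q := (k + d - 1) / d with hq
  have hA : (k : ℝ) ≤ (d : ℝ) * (q : ℝ) := by exact_mod_cast my_le_mul_ceilDiv k d hd
  have hBn : d * q ≤ k + d - 1 := Nat.mul_div_le _ _
  have hBz : (d : ℤ) * (q : ℤ) ≤ (k : ℤ) + (d : ℤ) - 1 := by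
    have h1 : ((d * q : ℕ) : ℤ) ≤ ((k + d - 1 : ℕ) : ℤ) := Nat.cast_le.mpr hBn
    rw [Nat.cast_sub (by omega : 1 ≤ k + d)] at h1
    push_cast at h1
    linarith
  have hB : (d : ℝ) * (q : ℝ) ≤ (k : ℝ) + (d : ℝ) - 1 := by exact_mod_cast hBz
  rw [Int.ceil_eq_iff]
  constructor
  · rw [lt_div_iff₀ hd']
    push_cast
    nlinarith
  · rw [div_le_iff₀ hd']
    push_cast
    nlinarith

/-- Ceiling-division nesting: `⌈k/2^(i+1)⌉ = ⌈⌈k/2⌉/2^i⌉`. -/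
lemma my_ceil_step (k i : ℕ) :
    (k + 2 ^ (i + 1) - 1) / 2 ^ (i + 1) = ((k + 1) / 2 + 2 ^ i - 1) / 2 ^ i := by
  have h1 : (1 : ℕ) ≤ 2 ^ i := Nat.one_le_two_pow
  have h2 : (k + 1) / 2 + 2 ^ i - 1 = (k + 1 + 2 * (2 ^ i - 1)) / 2 := by
    rw [Nat.add_mul_div_left _ _ (by norm_num : 0 < 2)]
    omega
  have h3 : k + 1 + 2 * (2 ^ i - 1) = k + 2 ^ (i + 1) - 1 := by
    have : 2 ^ (i + 1) = 2 * 2 ^ i := by ring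
    omega
  rw [h2, h3, Nat.div_div_eq_div_mul]
  congr 1
  ring

/-- Every `a ≤ k` with `a < 2^m`, `k ≤ 2^m` is a subset sum of `⌈k/2⌉,…,⌈k/2^m⌉`. -/
lemma my_digit_rep : ∀ (m k a : ℕ), a ≤ k → a < 2 ^ m → k ≤ 2 ^ m →
    ∃ c : ℕ → ℕ, (∀ i, c i ≤ 1) ∧
      a = ∑ i ∈ Finset.Icc 1 m, c i * ((k + 2 ^ i - 1) / 2 ^ i) := by
  intro m
  induction m with
  | zero =>
    intro k a hak ha hk
    refine ⟨fun _ => 0, fun _ => Nat.zero_le _, ?_⟩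
    simp only [pow_zero] at ha
    simp [show a = 0 by omega]
  | succ m ih =>
    intro k a hak ha hk
    have hP : (0:ℕ) < 2 ^ m := Nat.pow_pos (by norm_num)
    have hpow : 2 ^ (m + 1) = 2 * 2 ^ m := by ring
    set k' := (k + 1) / 2 with hk'def
    have hk2 : k ≤ 2 * k' ∧ 2 * k' ≤ k + 1 := by omega
    have hk'le : k' ≤ 2 ^ m := by omega
    set b : ℕ := if k' ≤ a then 1 else 0 with hb
    set a' : ℕ := a - b * k' with ha'
    have hbk : b * k' ≤ a ∧ a - b * k' ≤ k' ∧ a - b * k' < 2 ^ m := by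
      by_cases h : k' ≤ a <;> simp only [hb, if_pos, if_neg, h, ite_true, ite_false] <;> omega
    obtain ⟨c', hc'1, hc'2⟩ := ih k' a' hbk.2.1 hbk.2.2 hk'le
    refine ⟨fun i => if i = 1 then b else c' (i - 1), fun i => ?_, ?_⟩
    · by_cases h : i = 1
      · simp only [h, ite_true, hb]; split <;> omega
      · simpa [h] using hc'1 (i - 1)
    · show a = ∑ i ∈ Finset.Icc 1 (m + 1),
        (if i = 1 then b else c' (i - 1)) * ((k + 2 ^ i - 1) / 2 ^ i)
      have key : ∑ i ∈ Finset.Icc 1 (m + 1),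
          (if i = 1 then b else c' (i - 1)) * ((k + 2 ^ i - 1) / 2 ^ i)
          = b * ((k + 2 ^ 1 - 1) / 2 ^ 1)
            + ∑ i ∈ Finset.Icc 1 m, c' i * ((k' + 2 ^ i - 1) / 2 ^ i) := by
        rw [← Finset.Ico_add_one_right_eq_Icc, Finset.sum_Ico_eq_sum_range,
          ← Finset.Ico_add_one_right_eq_Icc (b := m), Finset.sum_Ico_eq_sum_range]
        simp only [Nat.add_sub_cancel, Nat.succ_sub_one]
        rw [Finset.sum_range_succ']
        have hterm : ∀ j ∈ Finset.range m,
            (if 1 + (j + 1) = 1 then b else c' (1 + (j + 1) - 1)) *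
              ((k + 2 ^ (1 + (j + 1)) - 1) / 2 ^ (1 + (j + 1)))
            = c' (1 + j) * ((k' + 2 ^ (1 + j) - 1) / 2 ^ (1 + j)) := by
          intro j _
          rw [if_neg (by omega), show 1 + (j + 1) - 1 = 1 + j by omega,
            show 1 + (j + 1) = (1 + j) + 1 by omega, my_ceil_step]
        rw [Finset.sum_congr rfl hterm]
        have hf0 : (if 1 + 0 = 1 then b else c' (1 + 0 - 1)) *
            ((k + 2 ^ (1 + 0) - 1) / 2 ^ (1 + 0)) = b * ((k + 2 ^ 1 - 1) / 2 ^ 1) := by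
          norm_num
        rw [hf0, Nat.add_comm]
      rw [key]
      have h4 : (k + 2 ^ 1 - 1) / 2 ^ 1 = k' := by
        simp only [pow_one]
        omega
      rw [h4, ← hc'2]
      omega

/-- Factorial base representation. -/
lemma my_fact_rep : ∀ (n x : ℕ), x < Nat.factorial n →
    ∃ a : ℕ → ℕ, (∀ k, a k ≤ k) ∧
      x = ∑ k ∈ Finset.Icc 1 (n - 1), a k * Nat.factorial k := by
  intro n
  induction n with
  | zero =>
    intro x hx
    simp [Nat.factorial] at hx
    exact ⟨fun _ => 0, fun _ => Nat.zero_le _, by simp [hx]⟩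
  | succ n ih =>
    intro x hx
    rcases Nat.eq_zero_or_pos n with hn0 | hn1
    · subst hn0
      simp [Nat.factorial] at hx
      exact ⟨fun _ => 0, fun _ => Nat.zero_le _, by simp [hx]⟩
    · have hfac : 0 < Nat.factorial n := Nat.factorial_pos n
      set q := x / Nat.factorial n with hq
      set r := x % Nat.factorial n with hr
      have hqn : q ≤ n := by
        have hlt : x < (n + 1) * Nat.factorial n := by
          rw [← Nat.factorial_succ]; exact hx
        have := (Nat.div_lt_iff_lt_mul hfac).mpr hlt
        omega
      have hrlt : r < Nat.factorial n := Nat.mod_lt _ hfac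
      obtain ⟨a, ha1, ha2⟩ := ih r hrlt
      refine ⟨Function.update a n q, fun k => ?_, ?_⟩
      · by_cases h : k = n
        · subst h; rw [Function.update_self]; omega
        · rw [Function.update_of_ne h]; exact ha1 k
      · have hsplit : n + 1 - 1 = (n - 1) + 1 := by omega
        have hne : (n - 1) + 1 = n := by omega
        rw [hsplit, Finset.sum_Icc_succ_top (by omega : 1 ≤ (n - 1) + 1), hne,
          Function.update_self]
        have hsum : ∑ k ∈ Finset.Icc 1 (n - 1),
            Function.update a n q k * Nat.factorial k
            = ∑ k ∈ Finset.Icc 1 (n - 1), a k * Nat.factorial k := by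
          apply Finset.sum_congr rfl
          intro k hk
          simp only [Finset.mem_Icc] at hk
          rw [Function.update_of_ne (by omega)]
        rw [hsum, ← ha2, Nat.mul_comm]
        have h5 : Nat.factorial n * q + r = x := Nat.div_add_mod x _
        omega

/-- Main lemma of Appendix A: every `x < n!` can be written as
`Σ_{k=1}^{n-1} Σ_{i=1}^{⌈log₂ n⌉} c_{k,i} · ⌈k/2^i⌉ · k!` with bits `c_{k,i}`. -/
theorem stmt12 (n : ℕ) (hn : 2 ≤ n) (x : ℕ) (hx : x < Nat.factorial n) :
    ∃ c : ℕ → ℕ → ℕ, (∀ k i, c k i ≤ 1) ∧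
      (x : ℤ) = ∑ k ∈ Finset.Icc 1 (n - 1), ∑ i ∈ Finset.Icc 1 (Nat.clog 2 n),
        (c k i : ℤ) * ⌈(k : ℝ) / 2 ^ i⌉ * ((Nat.factorial k : ℕ) : ℤ) := by
  set m := Nat.clog 2 n with hm
  have hn2m : n ≤ 2 ^ m := Nat.le_pow_clog (by norm_num) n
  obtain ⟨a, ha1, ha2⟩ := my_fact_rep n x hx
  have key : ∀ k, ∃ ck : ℕ → ℕ, (∀ i, ck i ≤ 1) ∧
      (k ∈ Finset.Icc 1 (n - 1) →
        a k = ∑ i ∈ Finset.Icc 1 m, ck i * ((k + 2 ^ i - 1) / 2 ^ i)) := by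
    intro k
    by_cases hk : k ∈ Finset.Icc 1 (n - 1)
    · simp only [Finset.mem_Icc] at hk
      have hak : a k ≤ k := ha1 k
      have hklt : k ≤ 2 ^ m := by omega
      have haklt : a k < 2 ^ m := by omega
      obtain ⟨c', h1, h2⟩ := my_digit_rep m k (a k) hak haklt hklt
      exact ⟨c', h1, fun _ => h2⟩
    · exact ⟨fun _ => 0, fun _ => Nat.zero_le _, fun h => absurd h hk⟩
  choose c hc1 hc2 using key
  refine ⟨c, hc1, ?_⟩
  have natid : x = ∑ k ∈ Finset.Icc 1 (n - 1), ∑ i ∈ Finset.Icc 1 m,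
      c k i * ((k + 2 ^ i - 1) / 2 ^ i) * Nat.factorial k := by
    rw [ha2]
    apply Finset.sum_congr rfl
    intro k hk
    rw [hc2 k hk, Finset.sum_mul]
  calc (x : ℤ) = ∑ k ∈ Finset.Icc 1 (n - 1), ∑ i ∈ Finset.Icc 1 m,
      (c k i : ℤ) * (((k + 2 ^ i - 1) / 2 ^ i : ℕ) : ℤ) * ((Nat.factorial k : ℕ) : ℤ) := by
        rw [natid]; push_cast; ring
    _ = _ := by
        apply Finset.sum_congr rfl
        intro k _
        apply Finset.sum_congr rfl
        intro i _
        rw [show ((2 : ℝ)) ^ i = ((2 ^ i : ℕ) : ℝ) by push_cast; ring,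
          my_ceil_cast k (2 ^ i) (Nat.pow_pos (by norm_num))]
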